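/- For all real numbers a, b in [0,1], one has (3/2 - √2)·(√a - √b)² ≤ (√((a+b)/2) - √b)². -/

import Mathlib

set_option maxHeartbeats 1000000

theorem stmt_0 (a b : ℝ) (ha : a ∈ Set.Icc (0:ℝ) 1) (hb : b ∈ Set.Icc (0:ℝ) 1) :
    (3/2 - Real.sqrt 2) * (Real.sqrt a - Real.sqrt b)^2 ≤
      (Real.sqrt ((a + b)/2) - Real.sqrt b)^2 := by
  obtain ⟨ha0, ha1⟩ := ha
  obtain ⟨hb0, hb1⟩ := hb
  set x := Real.sqrt a with hx
  set y := Real.sqrt b with hy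
  set s := Real.sqrt ((a + b)/2) with hs
  set r := Real.sqrt 2 with hr
  have hx0 : 0 ≤ x := Real.sqrt_nonneg _
  have hy0 : 0 ≤ y := Real.sqrt_nonneg _
  have hs0 : 0 ≤ s := Real.sqrt_nonneg _
  have hr0 : 0 ≤ r := Real.sqrt_nonneg _
  have hx2 : x^2 = a := Real.sq_sqrt ha0
  have hy2 : y^2 = b := Real.sq_sqrt hb0
  have hs2 : s^2 = (a + b)/2 := Real.sq_sqrt (by linarith)
  have hr2 : r^2 = 2 := Real.sq_sqrt (by norm_num)
  have hr1 : 1 ≤ r := by nlinarith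
  have hr2' : r ≤ 3/2 := by nlinarith
  -- squared key inequality: ((2-r)*s)^2 ≤ (x + (r-1)*y)^2
  have hsq : ((2 - r) * s)^2 ≤ (x + (r - 1) * y)^2 := by
    nlinarith [mul_nonneg (sub_nonneg.2 hr1) (sq_nonneg x),
      mul_nonneg (sub_nonneg.2 hr1) (mul_nonneg hx0 hy0)]
  have hL0 : 0 ≤ (2 - r) * s := mul_nonneg (by linarith) hs0
  have hR0 : 0 ≤ x + (r - 1) * y :=
    add_nonneg hx0 (mul_nonneg (by linarith) hy0)
  have key : (2 - r) * s ≤ x + (r - 1) * y := by nlinarith [hsq, hL0, hR0]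
  have key2 : (2 - r) * (s + y) ≤ x + y := by nlinarith [key]
  have hsy : (s - y) * (s + y) = (x - y) * (x + y) / 2 := by
    nlinarith [hs2, hx2, hy2]
  rcases eq_or_lt_of_le (add_nonneg hs0 hy0) with h0 | hpos
  · have hs' : s = 0 := by linarith
    have hy' : y = 0 := by linarith
    have hx' : x = 0 := by
      have : x^2 ≤ 0 := by nlinarith [hs2, hy2]
      nlinarith [sq_nonneg x]
    rw [hs', hy', hx']; norm_num
  · have hk0 : 0 ≤ (2 - r) * (s + y) :=
      mul_nonneg (by linarith) (by linarith)
    have hq' := mul_le_mul key2 key2 hk0 (by linarith : (0:ℝ) ≤ x + y)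
    have hq : (3/2 - r) * (s + y)^2 ≤ (x + y)^2 / 4 := by nlinarith [hq', hr2]
    have hmain : (3/2 - r) * (x - y)^2 * (s + y)^2 ≤ (s - y)^2 * (s + y)^2 := by
      have h1 : (3/2 - r) * (x - y)^2 * (s + y)^2 ≤ (x - y)^2 * ((x + y)^2 / 4) := by
        nlinarith [mul_le_mul_of_nonneg_left hq (sq_nonneg (x - y))]
      have h2 : (x - y)^2 * ((x + y)^2 / 4) = (s - y)^2 * (s + y)^2 := by
        have := congrArg (fun t => t^2) hsy
        nlinarith [this]
      linarith
    have hp2 : 0 < (s + y)^2 := by positivity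
    have := (mul_le_mul_iff_of_pos_right hp2).mp hmain
    linarith
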